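/- If A is a unital Banach algebra in which every derivation is inner, then every derivation on the matrix algebra M_n(A), n ≥ 2, is inner. -/

import Mathlib

def IsDerivation {A : Type*} [Ring A] [Algebra ℂ A] (D : A → A) : Prop :=
  (∀ x y, D (x + y) = D x + D y) ∧ (∀ (c : ℂ) (x), D (c • x) = c • D x) ∧
  (∀ x y, D (x * y) = D x * y + x * D y)

/-- Every derivation is inner. -/
def HasInnerDerivationProperty (A : Type*) [Ring A] [Algebra ℂ A] : Prop :=
  ∀ D : A → A, IsDerivation D → ∃ a : A, ∀ x, D x = a * x - x * a

section Aux

variable {A : Type*} [Ring A] [Algebra ℂ A]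

private lemma matrix_inner_aux (hA : HasInnerDerivationProperty A) {n : ℕ} (hn : 0 < n)
    (D : Matrix (Fin n) (Fin n) A → Matrix (Fin n) (Fin n) A)
    (hD : IsDerivation D) :
    ∃ a : Matrix (Fin n) (Fin n) A, ∀ x, D x = a * x - x * a := by
  obtain ⟨hadd, hsmul, hmul⟩ := hD
  have hD0 : D 0 = 0 := by
    have := hadd 0 0; simp only [add_zero] at this
    exact left_eq_add.mp this
  set z : Fin n := ⟨0, hn⟩ with hz
  set E : Fin n → Fin n → Matrix (Fin n) (Fin n) A :=
    fun i j => Matrix.single i j 1 with hE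
  have hEmul : ∀ i j k l, E i j * E k l = if j = k then E i l else 0 := by
    intro i j k l
    by_cases h : j = k
    · subst h; simp [hE, Matrix.single_mul_single_same]
    · simp [hE, Matrix.single_mul_single_of_ne (h := h), h]
  have hone : (1 : Matrix (Fin n) (Fin n) A) = ∑ i, E i i := by
    ext p q
    simp only [Matrix.sum_apply, hE, Matrix.single, Matrix.of_apply, Matrix.one_apply]
    by_cases h : p = q
    · subst h; simp
    · rw [if_neg h, Finset.sum_eq_zero]
      intro i _
      rw [if_neg]
      rintro ⟨rfl, rfl⟩; exact h rfl
  -- derivation maps finite sums to sums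
  have hsum : ∀ {ι : Type} (s : Finset ι) (f : ι → Matrix (Fin n) (Fin n) A),
      D (∑ i ∈ s, f i) = ∑ i ∈ s, D (f i) :=
    fun s f => map_sum (AddMonoidHom.mk' D hadd) f s
  set b : Matrix (Fin n) (Fin n) A := ∑ i, D (E i z) * E z i with hb
  have hbE : ∀ k l, b * E k l = D (E k z) * E z l := by
    intro k l
    rw [hb, Finset.sum_mul]
    have : ∀ i : Fin n, D (E i z) * E z i * (E k l)
        = if i = k then D (E k z) * E z l else 0 := by
      intro i
      rw [mul_assoc, hEmul]
      by_cases h : i = k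
      · subst h; simp
      · simp [h]
    simp_rw [this]
    simp
  have hEb : ∀ k l, E k l * b = D (E k z) * E z l - D (E k l) := by
    intro k l
    rw [hb, Finset.mul_sum]
    have key : ∀ i : Fin n, E k l * (D (E i z) * E z i)
        = (if l = i then D (E k z) else 0) * E z i - D (E k l) * (E i z * E z i) := by
      intro i
      have h1 : E k l * D (E i z) = D (E k l * E i z) - D (E k l) * E i z := by
        rw [hmul]; abel
      rw [← mul_assoc, h1, sub_mul, hEmul, mul_assoc]
      congr 2
      by_cases h : l = i
      · subst h; simp
      · simp [h, hD0]
    simp_rw [key, Finset.sum_sub_distrib, ← Finset.mul_sum]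
    have h2 : ∑ i : Fin n, (if l = i then D (E k z) else 0) * E z i = D (E k z) * E z l := by
      rw [Finset.sum_eq_single l]
      · simp
      · intro i _ h; simp [Ne.symm h]
      · simp
    have h3 : ∑ i : Fin n, E i z * E z i = 1 := by
      rw [hone]
      refine Finset.sum_congr rfl fun i _ => ?_
      rw [hEmul]; simp
    rw [h2, h3, mul_one]
  -- the modified derivation
  set D' : Matrix (Fin n) (Fin n) A → Matrix (Fin n) (Fin n) A :=
    fun x => D x - (b * x - x * b) with hD'
  have hD'add : ∀ x y, D' (x + y) = D' x + D' y := by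
    intro x y; simp only [hD', hadd, mul_add, add_mul]; abel
  have hD'mul : ∀ x y, D' (x * y) = D' x * y + x * D' y := by
    intro x y
    simp only [hD', hmul, sub_mul, mul_sub, mul_assoc]
    abel
  have hD'E : ∀ k l, D' (E k l) = 0 := by
    intro k l
    simp only [hD', hbE, hEb]
    abel
  have hD'sum : ∀ {ι : Type} (s : Finset ι) (f : ι → Matrix (Fin n) (Fin n) A),
      D' (∑ i ∈ s, f i) = ∑ i ∈ s, D' (f i) :=
    fun s f => map_sum (AddMonoidHom.mk' D' hD'add) f s
  -- the diagonal embedding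
  set ι : A → Matrix (Fin n) (Fin n) A := fun a => Matrix.diagonal (fun _ => a) with hι
  have hιE : ∀ (a : A) i j, ι a * E i j = E i j * ι a := by
    intro a i j
    ext p q
    rw [hι, Matrix.diagonal_mul, Matrix.mul_diagonal]
    simp only [hE, Matrix.single, Matrix.of_apply]
    split_ifs <;> simp
  have hcomm : ∀ (a : A) i j, D' (ι a) * E i j = E i j * D' (ι a) := by
    intro a i j
    have h1 := hD'mul (ι a) (E i j)
    have h2 := hD'mul (E i j) (ι a)
    rw [hιE a i j] at h1
    rw [h1] at h2
    simpa [hD'E] using h2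
  have hcentral : ∀ X : Matrix (Fin n) (Fin n) A,
      (∀ i j, X * E i j = E i j * X) → X = ι (X z z) := by
    intro X hX
    ext p q
    have key := congrFun (congrFun (hX q z) p) z
    simp only [hE] at key
    by_cases h : p = q
    · subst h
      simp only [Matrix.mul_single_apply_same, mul_one,
        Matrix.single_mul_apply_same, one_mul] at key
      simp [hι, Matrix.diagonal_apply_eq, key]
    · simp only [Matrix.mul_single_apply_same, mul_one] at key
      rw [Matrix.single_mul_apply_of_ne (h := h)] at key
      simp [hι, Matrix.diagonal_apply_ne _ h, key]
  set d : A → A := fun a => D' (ι a) z z with hd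
  have hιd : ∀ a, D' (ι a) = ι (d a) := fun a => hcentral _ (hcomm a)
  have hιadd : ∀ x y : A, ι (x + y) = ι x + ι y := by
    intro x y; simp [hι, Matrix.diagonal_add]
  have hιmul : ∀ x y : A, ι (x * y) = ι x * ι y := by
    intro x y; simp [hι]
  have hιsmul : ∀ (c : ℂ) (x : A), ι (c • x) = c • ι x := by
    intro c x; ext p q
    by_cases h : p = q <;> simp [hι, Matrix.diagonal_apply, h]
  have hdderiv : IsDerivation d := by
    refine ⟨fun x y => ?_, fun c x => ?_, fun x y => ?_⟩
    · simp only [hd, hιadd, hD'add]; rfl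
    · simp only [hd, hιsmul]
      rw [show D' (c • ι x) = c • D' (ι x) from ?_]
      · rfl
      · simp only [hD', hsmul, Matrix.mul_smul, Matrix.smul_mul, smul_sub]
    · have := hD'mul (ι x) (ι y)
      rw [← hιmul, hιd, hιd, hιd, ← hιmul, ← hιmul, ← hιadd] at this
      have := congrFun (congrFun this z) z
      simpa [hι, Matrix.diagonal_apply_eq] using this
  obtain ⟨c, hc⟩ := hA d hdderiv
  refine ⟨b + ι c, fun x => ?_⟩
  have hterm : ∀ i j, ι (x i j) * E i j = Matrix.single i j (x i j) := by
    intro i j; ext p q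
    rw [hι, hE]
    simp only [Matrix.diagonal_mul, Matrix.single, Matrix.of_apply, mul_ite, mul_one,
      mul_zero]
  have hdec : x = ∑ i, ∑ j, ι (x i j) * E i j := by
    simp_rw [hterm]; exact Matrix.matrix_eq_sum_single x
  have hιsub : ∀ u v : A, ι (u - v) = ι u - ι v := by
    intro u v; simp [hι, Matrix.diagonal_sub]
  have step : D' x = ∑ i, ∑ j, (ι c * (ι (x i j) * E i j) - (ι (x i j) * E i j) * ι c) := by
    conv_lhs => rw [hdec]
    rw [hD'sum]
    refine Finset.sum_congr rfl fun i _ => ?_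
    rw [hD'sum]
    refine Finset.sum_congr rfl fun j _ => ?_
    rw [hD'mul, hD'E, mul_zero, add_zero, hιd, hc (x i j), hιsub, hιmul, hιmul, sub_mul,
      ← mul_assoc, mul_assoc (ι (x i j)) (ι c) (E i j), hιE, ← mul_assoc]
  have hD'x : D' x = ι c * x - x * ι c := by
    rw [step]
    simp_rw [Finset.sum_sub_distrib, ← Finset.mul_sum, ← Finset.sum_mul]
    rw [← hdec]
  have hsplit : D x = D' x + (b * x - x * b) := by simp [hD']
  rw [hsplit, hD'x]
  noncomm_ring
end Aux

theorem stmt2 {A : Type*} [NormedRing A] [NormedAlgebra ℂ A] [CompleteSpace A]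
    (hA : HasInnerDerivationProperty A) {n : ℕ} (hn : 2 ≤ n)
    (D : Matrix (Fin n) (Fin n) A → Matrix (Fin n) (Fin n) A)
    (hD : IsDerivation D) :
    ∃ a : Matrix (Fin n) (Fin n) A, ∀ x, D x = a * x - x * a := by
  exact matrix_inner_aux hA (by omega) D hD
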